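/- Let n = 3k+1 with k ≥ 1 a natural number. Then: (a) every downhill weighing a : {1,…,n} → ℤ (a(1) > … > a(n)) with Σ_{i=1}^n i·a(i) ∈ {0, −1} has total weight Σ_{i=1}^n i·|a(i)| ≥ (8n³+12n²−12n−8)/81; and (b) there exists a downhill weighing a with Σ_{i=1}^n i·a(i) = 0 (a balance) whose total weight equals (8n³+12n²−12n−8)/81. Hence the minimum total weight of a downhill weighing that is balanced or a tight imbalance is (8n³+12n²−12n−8)/81, achieved by a balance. -/

import Mathlib

private lemma sum_id' (m : ℕ) : 2 * ∑ i ∈ Finset.Icc 1 m, (i : ℤ) = m * (m + 1) := by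
  induction m with
  | zero => simp
  | succ m ih =>
    rw [Finset.sum_Icc_succ_top (by omega)]
    push_cast
    push_cast at ih
    linear_combination ih

private lemma sum_sq' (m : ℕ) :
    6 * ∑ i ∈ Finset.Icc 1 m, (i : ℤ) ^ 2 = m * (m + 1) * (2 * m + 1) := by
  induction m with
  | zero => simp
  | succ m ih =>
    rw [Finset.sum_Icc_succ_top (by omega)]
    push_cast
    push_cast at ih
    linear_combination ih

private lemma master (c : ℤ) (m : ℕ) :
    6 * ∑ i ∈ Finset.Icc 1 m, (i : ℤ) * (c - i) =
      3 * c * m * (m + 1) - m * (m + 1) * (2 * m + 1) := by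
  have h1 := sum_id' m
  have h2 := sum_sq' m
  have e : ∑ i ∈ Finset.Icc 1 m, (i : ℤ) * (c - i)
      = c * (∑ i ∈ Finset.Icc 1 m, (i : ℤ)) - ∑ i ∈ Finset.Icc 1 m, (i : ℤ) ^ 2 := by
    rw [Finset.mul_sum, ← Finset.sum_sub_distrib]
    exact Finset.sum_congr rfl fun i _ => by ring
  rw [e]
  linear_combination 3 * c * h1 - h2

private lemma sum_split (f : ℕ → ℤ) {m n : ℕ} (h : m ≤ n) :
    (∑ i ∈ Finset.Icc 1 n, f i) =
      (∑ i ∈ Finset.Icc 1 m, f i) + ∑ i ∈ Finset.Icc (m + 1) n, f i := by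
  have h0 : ∀ x : ℕ, Finset.Icc 1 x = Finset.Ioc 0 x := fun x => Finset.Icc_add_one_left_eq_Ioc 0 x
  rw [h0, h0, Finset.Icc_add_one_left_eq_Ioc]
  exact (Finset.sum_Ioc_consecutive f (Nat.zero_le m) h).symm

private lemma mono' (n : ℕ) (a : ℕ → ℤ)
    (hdec : ∀ i j : ℕ, 1 ≤ i → i < j → j ≤ n → a j < a i) :
    ∀ i j : ℕ, 1 ≤ i → i ≤ j → j ≤ n → a j + ((j : ℤ) - (i : ℤ)) ≤ a i := by
  intro i j h1 hij
  induction j, hij using Nat.le_induction with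
  | base => intro _; simp
  | succ j hj ih =>
    intro hjn
    have h2 := hdec j (j + 1) (h1.trans hj) (Nat.lt_succ_self j) hjn
    have h3 := ih (by omega)
    push_cast at h3 ⊢
    omega


/-- For `n = 3k+1`, the minimum total weight of a downhill weighing that is a
balance or a tight imbalance equals `(8n³+12n²−12n−8)/81`, achieved by a
balance. (Stated with both sides multiplied by 81.) -/
theorem min_weight_three_k_plus_one (k n : ℕ) (hk : 1 ≤ k) (hn : n = 3 * k + 1) :
    (∀ a : ℕ → ℤ, (∀ i j : ℕ, 1 ≤ i → i < j → j ≤ n → a j < a i) →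
      (∑ i ∈ Finset.Icc 1 n, (i : ℤ) * a i = 0 ∨
        ∑ i ∈ Finset.Icc 1 n, (i : ℤ) * a i = -1) →
      8 * (n : ℤ) ^ 3 + 12 * (n : ℤ) ^ 2 - 12 * (n : ℤ) - 8 ≤
        81 * ∑ i ∈ Finset.Icc 1 n, (i : ℤ) * |a i|) ∧
    (∃ a : ℕ → ℤ, (∀ i j : ℕ, 1 ≤ i → i < j → j ≤ n → a j < a i) ∧
      ∑ i ∈ Finset.Icc 1 n, (i : ℤ) * a i = 0 ∧
      81 * ∑ i ∈ Finset.Icc 1 n, (i : ℤ) * |a i| =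
        8 * (n : ℤ) ^ 3 + 12 * (n : ℤ) ^ 2 - 12 * (n : ℤ) - 8) := by
  subst hn
  constructor
  · -- lower bound
    intro a hdec hS
    have hmono := mono' (3 * k + 1) a hdec
    have hS0 : (∑ i ∈ Finset.Icc 1 (3 * k + 1), (i : ℤ) * a i) ≤ 0 := by
      rcases hS with h | h <;> simp [h]
    have hS1 : (-1 : ℤ) ≤ ∑ i ∈ Finset.Icc 1 (3 * k + 1), (i : ℤ) * a i := by
      rcases hS with h | h <;> simp [h]
    by_cases hpos : 1 ≤ a (2 * k)
    · -- bound via the positive part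
      have hWS : (∑ i ∈ Finset.Icc 1 (3 * k + 1), (i : ℤ) * |a i|)
            + ∑ i ∈ Finset.Icc 1 (3 * k + 1), (i : ℤ) * a i
          = ∑ i ∈ Finset.Icc 1 (3 * k + 1), (i : ℤ) * (|a i| + a i) := by
        rw [← Finset.sum_add_distrib]
        exact Finset.sum_congr rfl fun i _ => by ring
      have hsub : (∑ i ∈ Finset.Icc 1 (2 * k), (i : ℤ) * (|a i| + a i))
          ≤ ∑ i ∈ Finset.Icc 1 (3 * k + 1), (i : ℤ) * (|a i| + a i) := by
        apply Finset.sum_le_sum_of_subset_of_nonneg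
        · exact Finset.Icc_subset_Icc_right (by omega)
        · intro i _ _
          have h3 := neg_abs_le (a i)
          have hi0 : (0 : ℤ) ≤ i := Int.natCast_nonneg i
          nlinarith
      have hterm : (∑ i ∈ Finset.Icc 1 (2 * k), (2 : ℤ) * ((i : ℤ) * (2 * (k : ℤ) + 1 - (i : ℤ))))
          ≤ ∑ i ∈ Finset.Icc 1 (2 * k), (i : ℤ) * (|a i| + a i) := by
        apply Finset.sum_le_sum
        intro i hi
        simp only [Finset.mem_Icc] at hi
        have h1 := hmono i (2 * k) hi.1 hi.2 (by omega)
        have h3 := le_abs_self (a i)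
        have hi0 : (0 : ℤ) ≤ i := Int.natCast_nonneg i
        push_cast at h1
        have key : 2 * (2 * (k : ℤ) + 1 - (i : ℤ)) ≤ |a i| + a i := by linarith
        calc (2 : ℤ) * ((i : ℤ) * (2 * (k : ℤ) + 1 - (i : ℤ)))
            = (i : ℤ) * (2 * (2 * (k : ℤ) + 1 - (i : ℤ))) := by ring
          _ ≤ (i : ℤ) * (|a i| + a i) := mul_le_mul_of_nonneg_left key hi0
      rw [← Finset.mul_sum] at hterm
      have hA := master (2 * (k : ℤ) + 1) (2 * k)
      push_cast at hA ⊢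
      linarith
    · push_neg at hpos
      have hneg : a (2 * k) ≤ 0 := by omega
      have hWS : (∑ i ∈ Finset.Icc 1 (3 * k + 1), (i : ℤ) * |a i|)
            - ∑ i ∈ Finset.Icc 1 (3 * k + 1), (i : ℤ) * a i
          = ∑ i ∈ Finset.Icc 1 (3 * k + 1), (i : ℤ) * (|a i| - a i) := by
        rw [← Finset.sum_sub_distrib]
        exact Finset.sum_congr rfl fun i _ => by ring
      have hsub : (∑ i ∈ Finset.Icc (2 * k + 1) (3 * k + 1), (i : ℤ) * (|a i| - a i))
          ≤ ∑ i ∈ Finset.Icc 1 (3 * k + 1), (i : ℤ) * (|a i| - a i) := by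
        apply Finset.sum_le_sum_of_subset_of_nonneg
        · exact Finset.Icc_subset_Icc (by omega) le_rfl
        · intro i _ _
          have h3 := le_abs_self (a i)
          have hi0 : (0 : ℤ) ≤ i := Int.natCast_nonneg i
          nlinarith
      have hterm : (∑ i ∈ Finset.Icc (2 * k + 1) (3 * k + 1),
            (-2 : ℤ) * ((i : ℤ) * (2 * (k : ℤ) - (i : ℤ))))
          ≤ ∑ i ∈ Finset.Icc (2 * k + 1) (3 * k + 1), (i : ℤ) * (|a i| - a i) := by
        apply Finset.sum_le_sum
        intro i hi
        simp only [Finset.mem_Icc] at hi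
        have h1 := hmono (2 * k) i (by omega) (by omega) hi.2
        have h3 := neg_abs_le (a i)
        have hi0 : (0 : ℤ) ≤ i := Int.natCast_nonneg i
        push_cast at h1
        have key : -2 * (2 * (k : ℤ) - (i : ℤ)) ≤ |a i| - a i := by linarith
        calc (-2 : ℤ) * ((i : ℤ) * (2 * (k : ℤ) - (i : ℤ)))
            = (i : ℤ) * (-2 * (2 * (k : ℤ) - (i : ℤ))) := by ring
          _ ≤ (i : ℤ) * (|a i| - a i) := mul_le_mul_of_nonneg_left key hi0
      rw [← Finset.mul_sum] at hterm
      have hsplit := sum_split (fun i => (i : ℤ) * (2 * (k : ℤ) - (i : ℤ)))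
        (show 2 * k ≤ 3 * k + 1 by omega)
      have hMn := master (2 * (k : ℤ)) (3 * k + 1)
      have hMm := master (2 * (k : ℤ)) (2 * k)
      push_cast at hMn hMm hsplit ⊢
      nlinarith [sq_nonneg ((k : ℤ)), Int.natCast_nonneg k]
  · -- the optimal balance
    refine ⟨fun i => 2 * (k : ℤ) + 1 - (i : ℤ), ?_, ?_, ?_⟩
    · intro i j _ hij _
      have : (i : ℤ) < (j : ℤ) := by exact_mod_cast hij
      simp only
      linarith
    · have h := master (2 * (k : ℤ) + 1) (3 * k + 1)
      push_cast at h
      simp only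
      linarith
    · simp only
      have hsplit := sum_split (fun i => (i : ℤ) * |2 * (k : ℤ) + 1 - (i : ℤ)|)
        (show 2 * k + 1 ≤ 3 * k + 1 by omega)
      have e1 : (∑ i ∈ Finset.Icc 1 (2 * k + 1), (i : ℤ) * |2 * (k : ℤ) + 1 - (i : ℤ)|)
          = ∑ i ∈ Finset.Icc 1 (2 * k + 1), (i : ℤ) * (2 * (k : ℤ) + 1 - (i : ℤ)) := by
        apply Finset.sum_congr rfl
        intro i hi
        simp only [Finset.mem_Icc] at hi
        have : (i : ℤ) ≤ 2 * k + 1 := by exact_mod_cast hi.2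
        rw [abs_of_nonneg (by linarith)]
      have e2 : (∑ i ∈ Finset.Icc (2 * k + 1 + 1) (3 * k + 1), (i : ℤ) * |2 * (k : ℤ) + 1 - (i : ℤ)|)
          = -∑ i ∈ Finset.Icc (2 * k + 1 + 1) (3 * k + 1), (i : ℤ) * (2 * (k : ℤ) + 1 - (i : ℤ)) := by
        rw [← Finset.sum_neg_distrib]
        apply Finset.sum_congr rfl
        intro i hi
        simp only [Finset.mem_Icc] at hi
        have : ((2 * k + 2 : ℕ) : ℤ) ≤ (i : ℤ) := by exact_mod_cast hi.1
        push_cast at this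
        rw [abs_of_nonpos (by linarith)]
        ring
      have hsplit2 := sum_split (fun i => (i : ℤ) * (2 * (k : ℤ) + 1 - (i : ℤ)))
        (show 2 * k + 1 ≤ 3 * k + 1 by omega)
      have hM1 := master (2 * (k : ℤ) + 1) (2 * k + 1)
      have hMn := master (2 * (k : ℤ) + 1) (3 * k + 1)
      push_cast at hsplit e1 e2 hsplit2 hM1 hMn ⊢
      linarith
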